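/- Let A, B be symmetric commuting n×n real matrices with λ_max(A·B) = 1/T > 0, and let w be a unit eigenvector with A·B·w = (1/T)·w. Then for t ∈ [0, T), the solution X(t) = A·(Id - t·A·B)⁻¹ satisfies X(t)·(Id - t·A·B)·w = A·w, and ⟨X(t)w, w'⟩ → ∞ as t → T⁻ for a suitable vector w' whenever A·w ≠ 0; i.e., the blowup time of the forward solution is exactly T. -/
import Mathlib


open Matrix Filter

/-- For symmetric commuting `A, B` with largest eigenvalue `1/T > 0` of `A*B` attained at
the unit eigenvector `w`, the solution `X(t) = A (Id - t A B)⁻¹` exists on `[0, T)`,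
satisfies `X(t) (Id - t A B) w = A w`, and some matrix coefficient `⟨X(t) w, w'⟩` tends to
infinity as `t → T⁻`: the blowup time is exactly `T`. -/
theorem blowup_time_exactly_T {n : ℕ} (A B : Matrix (Fin n) (Fin n) ℝ)
    (hA : A.IsSymm) (hB : B.IsSymm) (hAB : A * B = B * A) (T : ℝ) (hT : 0 < T)
    (w : Fin n → ℝ) (hw : w ⬝ᵥ w = 1) (heig : (A * B).mulVec w = (1 / T) • w)
    (hmax : IsGreatest {r : ℝ | ∃ x : Fin n → ℝ, x ⬝ᵥ x = 1 ∧ (A * B).mulVec x ⬝ᵥ x = r}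
      (1 / T)) :
    (∀ t ∈ Set.Ico (0 : ℝ) T,
        IsUnit (1 - t • (A * B)) ∧
        ((A * (1 - t • (A * B))⁻¹) * (1 - t • (A * B))).mulVec w = A.mulVec w ∧
        (A * (1 - t • (A * B))⁻¹).mulVec w = (1 - t / T)⁻¹ • A.mulVec w) ∧
      A.mulVec w ≠ 0 ∧
      ∃ w' : Fin n → ℝ,
        Tendsto (fun t : ℝ => (A * (1 - t • (A * B))⁻¹).mulVec w ⬝ᵥ w')
          (nhdsWithin T (Set.Iio T)) atTop := by
  have hw0 : w ≠ 0 := by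
    intro h; rw [h] at hw; simp at hw
  -- Rayleigh quotient bound
  have hR : ∀ x : Fin n → ℝ, (A * B).mulVec x ⬝ᵥ x ≤ (1 / T) * (x ⬝ᵥ x) := by
    intro x
    rcases eq_or_ne x 0 with rfl | hx
    · simp
    · have hs : 0 < x ⬝ᵥ x :=
        lt_of_le_of_ne (Finset.sum_nonneg fun i _ => mul_self_nonneg (x i))
          (Ne.symm (fun h => hx (dotProduct_self_eq_zero.1 h)))
      set s : ℝ := x ⬝ᵥ x with hsdef
      have hsq : Real.sqrt s * Real.sqrt s = s := Real.mul_self_sqrt hs.le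
      have hsqpos : 0 < Real.sqrt s := Real.sqrt_pos.2 hs
      set u : Fin n → ℝ := (Real.sqrt s)⁻¹ • x with hu
      have hu1 : u ⬝ᵥ u = 1 := by
        rw [hu, smul_dotProduct, dotProduct_smul, ← hsdef, smul_eq_mul, smul_eq_mul,
          ← mul_assoc, ← mul_inv, hsq, inv_mul_cancel₀ hs.ne']
      have hle := hmax.2 ⟨u, hu1, rfl⟩
      have heq : (A * B).mulVec u ⬝ᵥ u
          = (Real.sqrt s)⁻¹ * ((Real.sqrt s)⁻¹ * ((A * B).mulVec x ⬝ᵥ x)) := by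
        rw [hu, mulVec_smul, smul_dotProduct, dotProduct_smul, smul_eq_mul, smul_eq_mul]
      rw [heq] at hle
      have h2 : (Real.sqrt s)⁻¹ * (Real.sqrt s)⁻¹ = s⁻¹ := by
        rw [← mul_inv]; rw [hsq]
      calc (A * B).mulVec x ⬝ᵥ x = s * (s⁻¹ * ((A * B).mulVec x ⬝ᵥ x)) := by
            field_simp
        _ ≤ s * (1 / T) := by
            apply mul_le_mul_of_nonneg_left _ hs.le
            calc s⁻¹ * ((A * B).mulVec x ⬝ᵥ x)
                = (Real.sqrt s)⁻¹ * ((Real.sqrt s)⁻¹ * ((A * B).mulVec x ⬝ᵥ x)) := by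
                  rw [← mul_assoc, h2]
              _ ≤ 1 / T := hle
        _ = (1 / T) * s := by ring
  -- main pointwise facts
  have main : ∀ t ∈ Set.Ico (0 : ℝ) T,
      IsUnit (1 - t • (A * B)) ∧
      ((A * (1 - t • (A * B))⁻¹) * (1 - t • (A * B))).mulVec w = A.mulVec w ∧
      (A * (1 - t • (A * B))⁻¹).mulVec w = (1 - t / T)⁻¹ • A.mulVec w := by
    intro t ht
    obtain ⟨ht0, htT⟩ := ht
    have hfrac : t / T < 1 := (div_lt_one hT).2 htT
    have hfrac0 : (0:ℝ) < 1 - t / T := by linarith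
    -- invertibility via injectivity
    have hker : ∀ x : Fin n → ℝ, (1 - t • (A * B)).mulVec x = 0 → x = 0 := by
      intro x hx
      by_contra hx0
      have hs : 0 < x ⬝ᵥ x :=
        lt_of_le_of_ne (Finset.sum_nonneg fun i _ => mul_self_nonneg (x i))
          (Ne.symm (fun h => hx0 (dotProduct_self_eq_zero.1 h)))
      have hq : (1 - t • (A * B)).mulVec x ⬝ᵥ x
          = x ⬝ᵥ x - t * ((A * B).mulVec x ⬝ᵥ x) := by
        rw [sub_mulVec, one_mulVec, sub_dotProduct, smul_mulVec,
          smul_dotProduct, smul_eq_mul]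
      rw [hx] at hq
      simp only [zero_dotProduct] at hq
      have hb := hR x
      have ht' : t * ((A * B).mulVec x ⬝ᵥ x) ≤ t * ((1 / T) * (x ⬝ᵥ x)) :=
        mul_le_mul_of_nonneg_left hb ht0
      have hlt : t * ((1 / T) * (x ⬝ᵥ x)) < x ⬝ᵥ x := by
        have he : t * ((1 / T) * (x ⬝ᵥ x)) = (t / T) * (x ⬝ᵥ x) := by ring
        rw [he]
        nlinarith
      linarith
    have hinj : Function.Injective (1 - t • (A * B)).mulVec := by
      intro x y hxy
      have := hker (x - y) (by rw [mulVec_sub, hxy, sub_self])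
      exact sub_eq_zero.1 this
    have hunit : IsUnit (1 - t • (A * B)) := mulVec_injective_iff_isUnit.1 hinj
    have hdet : IsUnit (1 - t • (A * B)).det := (isUnit_iff_isUnit_det _).1 hunit
    -- eigen computation
    have hvec : (1 - t • (A * B)).mulVec w = (1 - t / T) • w := by
      rw [sub_mulVec, one_mulVec, smul_mulVec, heig, smul_smul, sub_smul, one_smul]
      congr 1
      rw [mul_one_div]
    have hinvvec : (1 - t • (A * B))⁻¹.mulVec w = (1 - t / T)⁻¹ • w := by
      apply hinj
      rw [mulVec_mulVec, mul_nonsing_inv _ hdet, one_mulVec, mulVec_smul, hvec,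
        smul_smul, inv_mul_cancel₀ hfrac0.ne', one_smul]
    refine ⟨hunit, ?_, ?_⟩
    · rw [mul_assoc, nonsing_inv_mul _ hdet, mul_one]
    · rw [← mulVec_mulVec, hinvvec, mulVec_smul]
  refine ⟨main, ?_, ?_⟩
  · -- A w ≠ 0
    intro hAw
    have : (A * B).mulVec w = 0 := by
      rw [hAB, ← mulVec_mulVec, hAw, mulVec_zero]
    rw [heig] at this
    rcases smul_eq_zero.1 this with h | h
    · exact absurd h (by positivity)
    · exact hw0 h
  · -- blowup
    have hAw : A.mulVec w ≠ 0 := by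
      intro hAw
      have : (A * B).mulVec w = 0 := by
        rw [hAB, ← mulVec_mulVec, hAw, mulVec_zero]
      rw [heig] at this
      rcases smul_eq_zero.1 this with h | h
      · exact absurd h (by positivity)
      · exact hw0 h
    refine ⟨A.mulVec w, ?_⟩
    set c : ℝ := A.mulVec w ⬝ᵥ A.mulVec w with hc
    have hcpos : 0 < c :=
      lt_of_le_of_ne (Finset.sum_nonneg fun i _ => mul_self_nonneg _)
        (Ne.symm (fun h => hAw (dotProduct_self_eq_zero.1 h)))
    have h1 : Tendsto (fun t : ℝ => (1 - t / T)⁻¹) (nhdsWithin T (Set.Iio T)) atTop := by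
      apply Filter.Tendsto.inv_tendsto_nhdsGT_zero
      apply tendsto_nhdsWithin_of_tendsto_nhds_of_eventually_within
      · have : Tendsto (fun t : ℝ => 1 - t / T) (nhds T) (nhds (1 - T / T)) := by
          exact (tendsto_const_nhds.sub (tendsto_id.div_const T))
        simpa [div_self hT.ne'] using this.mono_left nhdsWithin_le_nhds
      · filter_upwards [self_mem_nhdsWithin] with t (ht : t < T)
        have : t / T < 1 := (div_lt_one hT).2 ht
        simpa [Set.mem_Ioi] using by linarith
    have h2 : Tendsto (fun t : ℝ => (1 - t / T)⁻¹ * c) (nhdsWithin T (Set.Iio T)) atTop :=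
      h1.atTop_mul_const hcpos
    apply h2.congr'
    have hmem : Set.Ioo (0 : ℝ) T ∈ nhdsWithin T (Set.Iio T) :=
      Ioo_mem_nhdsLT_of_mem ⟨hT, le_refl T⟩
    filter_upwards [hmem] with t ht
    have := (main t ⟨ht.1.le, ht.2⟩).2.2
    rw [this, smul_dotProduct, smul_eq_mul, hc]
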